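/- For each fixed $r_2 \geq 0$, there exists a unique $r_3 > r_2$ with $p(r_2, r_3) = 0$, where $p$ is Euler's quintic $p(r_2,r_3) = -r_2^5 + 2r_2^4 r_3 - 2r_2^4 - r_2^3 r_3^2 + 4r_2^3 r_3 - r_2^3 + r_2^2 r_3^3 - r_2^2 r_3^2 + r_2^2 r_3 - r_2^2 - 2r_2 r_3^4 - 4r_2 r_3^3 - 5r_2 r_3^2 - 4r_2 r_3 - 2r_2 + r_3^5 + 2r_3^4 + r_3^3 - r_3^2 - 2r_3 - 1$. -/
import Mathlib


/-- Euler's quintic. -/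
def eulerP (r2 r3 : ℝ) : ℝ :=
  -r2^5 + 2*r2^4*r3 - 2*r2^4 - r2^3*r3^2 + 4*r2^3*r3 - r2^3 + r2^2*r3^3 - r2^2*r3^2
    + r2^2*r3 - r2^2 - 2*r2*r3^4 - 4*r2*r3^3 - 5*r2*r3^2 - 4*r2*r3 - 2*r2
    + r3^5 + 2*r3^4 + r3^3 - r3^2 - 2*r3 - 1

/-- Key monotonicity fact: for `r2 < x < y`, we have
`(x-r2)^2 * p(r2,y) > (y-r2)^2 * p(r2,x)`. -/
lemma eulerP_key (r2 x y : ℝ) (h2 : 0 ≤ r2) (hx : r2 < x) (hxy : x < y) :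
    (y - r2)^2 * eulerP r2 x < (x - r2)^2 * eulerP r2 y := by
  have ha : 0 < x - r2 := by linarith
  have hb : 0 < y - r2 := by linarith
  have hba : 0 < (y - r2) - (x - r2) := by linarith
  have hid : (x - r2)^2 * eulerP r2 y - (y - r2)^2 * eulerP r2 x =
      (x-r2)^2*(y-r2)^2*((y-r2)^3-(x-r2)^3)
      + (3*r2+2)*((x-r2)^2*(y-r2)^2*(((y-r2)-(x-r2))*((y-r2)+(x-r2))))
      + ((3*r2+1)*(r2+1))*((x-r2)^2*(y-r2)^2*((y-r2)-(x-r2)))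
      + 2*(r2+1)^3*((x-r2)*(y-r2)*((y-r2)-(x-r2)))
      + (r2+1)^4*(((y-r2)-(x-r2))*((y-r2)+(x-r2))) := by
    unfold eulerP; ring
  have h1 : 0 < (x-r2)^2*(y-r2)^2*((y-r2)^3-(x-r2)^3) := by
    apply mul_pos (by positivity)
    nlinarith [sq_nonneg (x - r2), sq_nonneg (y - r2), mul_pos ha hb]
  have h3 : 0 ≤ (3*r2+2)*((x-r2)^2*(y-r2)^2*(((y-r2)-(x-r2))*((y-r2)+(x-r2)))) := by
    apply mul_nonneg (by linarith)
    apply mul_nonneg (by positivity)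
    apply mul_nonneg (by linarith) (by linarith)
  have h4 : 0 ≤ ((3*r2+1)*(r2+1))*((x-r2)^2*(y-r2)^2*((y-r2)-(x-r2))) := by
    apply mul_nonneg (by nlinarith)
    apply mul_nonneg (by positivity) (by linarith)
  have h5 : 0 ≤ 2*(r2+1)^3*((x-r2)*(y-r2)*((y-r2)-(x-r2))) := by
    apply mul_nonneg (by positivity)
    apply mul_nonneg (by positivity) (by linarith)
  have h6 : 0 ≤ (r2+1)^4*(((y-r2)-(x-r2))*((y-r2)+(x-r2))) := by
    apply mul_nonneg (by positivity)
    apply mul_nonneg (by linarith) (by linarith)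
  linarith [hid, h1, h3, h4, h5, h6]

/-- for each `r2 ≥ 0` there is a unique `r3 > r2` with `p(r2, r3) = 0`. -/
theorem euler_quintic_unique_root (r2 : ℝ) (h2 : 0 ≤ r2) :
    ∃! r3 : ℝ, r2 < r3 ∧ eulerP r2 r3 = 0 := by
  have hcont : ContinuousOn (eulerP r2) (Set.Icc r2 (3*r2+2)) := by
    unfold eulerP; fun_prop
  have hle : r2 ≤ 3*r2+2 := by linarith
  have hfa : eulerP r2 r2 < 0 := by
    have : eulerP r2 r2 = -(r2+1)^4 := by unfold eulerP; ring
    have h4 : 0 < (r2+1)^4 := by positivity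
    linarith [this]
  have hfb : 0 < eulerP r2 (3*r2+2) := by
    have : eulerP r2 (3*r2+2) =
        104*r2^5 + 479*r2^4 + 876*r2^3 + 794*r2^2 + 356*r2 + 63 := by
      unfold eulerP; ring
    rw [this]; positivity
  have hmem : (0:ℝ) ∈ Set.Ioo (eulerP r2 r2) (eulerP r2 (3*r2+2)) := ⟨hfa, hfb⟩
  obtain ⟨r3, hr3mem, hr3⟩ := intermediate_value_Ioo hle hcont hmem
  refine ⟨r3, ⟨hr3mem.1, hr3⟩, ?_⟩
  rintro y ⟨hy, hyz⟩
  by_contra hne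
  rcases lt_or_gt_of_ne hne with h | h
  · have := eulerP_key r2 y r3 h2 hy h
    rw [hyz, hr3] at this; simp at this
  · have := eulerP_key r2 r3 y h2 hr3mem.1 h
    rw [hyz, hr3] at this; simp at this
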